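/- For the sequence α_k = k² (so g(x) = Li_{-1}(x) = x/(1-x)²), the numbers b_n = n! · [x^n] exp(-x/(1-x)²) are integers for every n ≥ 0, with b₀ = 1, b₁ = -1, b₂ = -3, b₃ = -7, b₄ = 1. -/

import Mathlib

noncomputable def expPS (f : PowerSeries ℚ) : PowerSeries ℚ :=
  PowerSeries.mk fun n =>
    ∑ m ∈ Finset.range (n + 1), ((m.factorial : ℚ))⁻¹ * PowerSeries.coeff n (f ^ m)

open PowerSeries Finset

namespace Stmt14Aux

noncomputable def G : PowerSeries ℚ := PowerSeries.mk fun k => -(k : ℚ)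

lemma coeff_G_pow {m n : ℕ} (h : n < m) : coeff n (G ^ m) = 0 := by
  have hX : (X : ℚ⟦X⟧) ∣ G := X_dvd_iff.mpr (by simp [G])
  exact X_pow_dvd_iff.mp (pow_dvd_pow_of_dvd hX m) n h

noncomputable def S (N : ℕ) : ℚ⟦X⟧ := ∑ m ∈ range N, ((m.factorial : ℚ))⁻¹ • G ^ m

lemma coeff_S (n N : ℕ) :
    coeff n (S N) = ∑ m ∈ range N, ((m.factorial : ℚ))⁻¹ * coeff n (G ^ m) := by
  simp [S]

lemma coeff_F (n N : ℕ) (h : n < N) : coeff n (expPS G) = coeff n (S N) := by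
  rw [expPS, coeff_mk, coeff_S]
  refine Finset.sum_subset (Finset.range_subset_range.mpr h) fun x _ hx => ?_
  rw [coeff_G_pow (by simpa using hx), mul_zero]

lemma key (n : ℕ) :
    ((n : ℚ) + 1) * coeff (n + 1) (expPS G) =
      ∑ j ∈ range (n + 1), (-(((n - j : ℕ) : ℚ) + 1) ^ 2) * coeff j (expPS G) := by
  have hcdG : ∀ k, coeff k (d⁄dX ℚ G) = -(((k : ℚ) + 1)) ^ 2 := by
    intro k
    rw [coeff_derivative, G, coeff_mk]
    push_cast; ring
  have h1 : ((n : ℚ) + 1) * coeff (n + 1) (expPS G) = coeff n (d⁄dX ℚ (S (n + 2))) := by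
    rw [coeff_derivative, ← coeff_F (n + 1) (n + 2) (by omega)]
    ring
  rw [h1]
  have hd : coeff n (d⁄dX ℚ (S (n + 2))) =
      ∑ m ∈ range (n + 2),
        ((m.factorial : ℚ))⁻¹ * ((m : ℚ) * coeff n (G ^ (m - 1) * d⁄dX ℚ G)) := by
    rw [S, map_sum, map_sum]
    refine Finset.sum_congr rfl fun m _ => ?_
    rw [Derivation.map_smul, Derivation.leibniz_pow]
    simp [← Nat.cast_smul_eq_nsmul ℚ, smul_eq_mul]
  rw [hd, Finset.sum_range_succ']
  have hstep : ∀ i : ℕ,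
      (((i + 1).factorial : ℚ))⁻¹ * (((i + 1 : ℕ) : ℚ) * coeff n (G ^ (i + 1 - 1) * d⁄dX ℚ G))
        = ((i.factorial : ℚ))⁻¹ * coeff n (G ^ i * d⁄dX ℚ G) := by
    intro i
    have hf : (((i + 1).factorial : ℚ)) = ((i : ℚ) + 1) * (i.factorial : ℚ) := by
      rw [Nat.factorial_succ]; push_cast; ring
    have h1 : ((i : ℚ) + 1) ≠ 0 := by positivity
    have h2 : (i.factorial : ℚ) ≠ 0 := by positivity
    rw [Nat.add_sub_cancel, hf, mul_inv]
    push_cast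
    field_simp
  simp only [hstep, Nat.cast_zero, zero_mul, mul_zero, add_zero]
  calc ∑ i ∈ range (n + 1), ((i.factorial : ℚ))⁻¹ * coeff n (G ^ i * d⁄dX ℚ G)
      = ∑ i ∈ range (n + 1), ∑ p ∈ Finset.HasAntidiagonal.antidiagonal n,
          ((i.factorial : ℚ))⁻¹ * (coeff p.1 (G ^ i) * coeff p.2 (d⁄dX ℚ G)) := by
        refine Finset.sum_congr rfl fun i _ => ?_
        rw [coeff_mul, Finset.mul_sum]
    _ = ∑ p ∈ Finset.HasAntidiagonal.antidiagonal n,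
          (∑ i ∈ range (n + 1), ((i.factorial : ℚ))⁻¹ * coeff p.1 (G ^ i))
            * coeff p.2 (d⁄dX ℚ G) := by
        rw [Finset.sum_comm]
        refine Finset.sum_congr rfl fun p _ => ?_
        rw [Finset.sum_mul]
        refine Finset.sum_congr rfl fun i _ => by ring
    _ = ∑ p ∈ Finset.HasAntidiagonal.antidiagonal n, coeff p.1 (expPS G) * coeff p.2 (d⁄dX ℚ G) := by
        refine Finset.sum_congr rfl fun p hp => ?_
        have hp1 : p.1 ≤ n := by
          have := Finset.HasAntidiagonal.mem_antidiagonal.mp hp; omega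
        rw [coeff_F p.1 (n + 1) (by omega), coeff_S]
    _ = ∑ j ∈ range (n + 1), (-(((n - j : ℕ) : ℚ) + 1) ^ 2) * coeff j (expPS G) := by
        rw [Finset.Nat.sum_antidiagonal_eq_sum_range_succ_mk]
        refine Finset.sum_congr rfl fun j _ => ?_
        rw [hcdG]
        ring

end Stmt14Aux

open Stmt14Aux in
theorem stmt14 (f : PowerSeries ℚ)
    (hf : f = expPS (PowerSeries.mk fun k => -(k : ℚ)))
    (b : ℕ → ℚ) (hb : ∀ m, b m = (m.factorial : ℚ) * PowerSeries.coeff m f) :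
    (∀ m, ∃ z : ℤ, b m = (z : ℚ)) ∧
    b 0 = 1 ∧ b 1 = -1 ∧ b 2 = -3 ∧ b 3 = -7 ∧ b 4 = 1 := by
  have hG : (PowerSeries.mk fun k => -(k : ℚ)) = G := rfl
  rw [hG] at hf
  subst hf
  have hb0 : b 0 = 1 := by
    rw [hb 0]
    simp [expPS]
  have hbrec : ∀ n, b (n + 1) = ∑ j ∈ range (n + 1),
      (-(((n - j : ℕ) : ℚ) + 1) ^ 2) * ((n.factorial / j.factorial : ℕ) : ℚ) * b j := by
    intro n
    rw [hb (n + 1)]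
    have hfs : (((n + 1).factorial : ℚ)) = (n.factorial : ℚ) * ((n : ℚ) + 1) := by
      rw [Nat.factorial_succ]; push_cast; ring
    rw [hfs, mul_assoc, key n, Finset.mul_sum]
    refine Finset.sum_congr rfl fun j hj => ?_
    rw [hb j]
    have hjn : j ≤ n := by
      have := Finset.mem_range.mp hj; omega
    have hdiv : ((n.factorial / j.factorial : ℕ) : ℚ) * (j.factorial : ℚ) = (n.factorial : ℚ) := by
      rw [← Nat.cast_mul, Nat.div_mul_cancel (Nat.factorial_dvd_factorial hjn)]
    rw [← hdiv]
    ring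
  have hint : ∀ m, ∃ z : ℤ, b m = (z : ℚ) := by
    intro m
    induction m using Nat.strong_induction_on with
    | _ m ih =>
      match m with
      | 0 => exact ⟨1, by simpa using hb0⟩
      | n + 1 =>
        have hmem : b (n + 1) ∈ (Int.castRingHom ℚ).range := by
          rw [hbrec n]
          refine Subring.sum_mem _ fun j hj => ?_
          refine Subring.mul_mem _ (Subring.mul_mem _ ?_ ?_) ?_
          · exact ⟨-(((n - j : ℕ) : ℤ) + 1) ^ 2, by rw [eq_intCast]; push_cast; ring⟩
          · exact ⟨((n.factorial / j.factorial : ℕ) : ℤ), by rw [eq_intCast]; norm_cast⟩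
          · obtain ⟨z, hz⟩ := ih j (Finset.mem_range.mp hj)
            exact ⟨z, hz.symm⟩
        obtain ⟨z, hz⟩ := hmem
        exact ⟨z, hz.symm⟩
  have hb1 : b 1 = -1 := by
    rw [hbrec 0]
    norm_num [Finset.sum_range_succ, hb0, Nat.factorial]
  have hb2 : b 2 = -3 := by
    rw [show (2:ℕ) = 1 + 1 from rfl, hbrec 1]
    norm_num [Finset.sum_range_succ, hb0, hb1, Nat.factorial]
  have hb3 : b 3 = -7 := by
    rw [show (3:ℕ) = 2 + 1 from rfl, hbrec 2]
    norm_num [Finset.sum_range_succ, hb0, hb1, hb2, Nat.factorial]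
  have hb4 : b 4 = 1 := by
    rw [show (4:ℕ) = 3 + 1 from rfl, hbrec 3]
    norm_num [Finset.sum_range_succ, hb0, hb1, hb2, hb3, Nat.factorial]
  exact ⟨hint, hb0, hb1, hb2, hb3, hb4⟩
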